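/- Let M be a k×k block matrix whose blocks A_{ij} are n×n real matrices that commute pairwise (A_{ij}A_{lm} = A_{lm}A_{ij} for all indices). Then det(M) = det( ∑_{σ ∈ S_k} sgn(σ) A_{1σ(1)} A_{2σ(2)} ⋯ A_{kσ(k)} ), where the sum ranges over all permutations σ of {1, …, k}. -/

import Mathlib

open Matrix Polynomial

/-- The big block matrix assembled from blocks. -/
def bM {R : Type*} (k n : ℕ) (A : Fin k → Fin k → Matrix (Fin n) (Fin n) R) :
    Matrix (Fin k × Fin n) (Fin k × Fin n) R :=
  Matrix.of fun p q => A p.1 q.1 p.2 q.2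

/-- The "formal determinant" sum in a (possibly noncommutative) ring. -/
def Ds {S : Type*} [Ring S] (k : ℕ) (M : Fin k → Fin k → S) : S :=
  ∑ σ : Equiv.Perm (Fin k), ((Equiv.Perm.sign σ : ℤ) • (List.ofFn fun i => M i (σ i)).prod)

theorem Ds_comm {S : Type*} [CommRing S] (k : ℕ) (M : Fin k → Fin k → S) :
    Ds k M = (Matrix.of M).det := by
  rw [← Matrix.det_transpose, Matrix.det_apply]
  simp [Ds, List.prod_ofFn, Units.smul_def, Matrix.transpose_apply]

theorem Ds_map {S T : Type*} [Ring S] [Ring T] (f : S →+* T) (k : ℕ)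
    (M : Fin k → Fin k → S) : f (Ds k M) = Ds k (fun i j => f (M i j)) := by
  simp only [Ds, map_sum, map_zsmul]
  congr 1; funext σ
  rw [map_list_prod, List.map_ofFn]
  rfl
open Matrix Polynomial
def e1 (k : ℕ) : Fin 1 ⊕ Fin k ≃ Fin (k + 1) where
  toFun := Sum.elim (fun _ => 0) Fin.succ
  invFun p := Fin.cases (Sum.inl 0) Sum.inr p
  left_inv := by
    rintro (a | a)
    · simp [Subsingleton.elim a 0]
    · simp
  right_inv p := by cases p using Fin.cases <;> simp

theorem Ds_schur {S : Type*} [CommRing S] (k : ℕ) (M : Fin (k + 1) → Fin (k + 1) → S)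
    (u : S) (h1 : M 0 0 * u = 1) (h2 : u * M 0 0 = 1) :
    Ds (k + 1) M
      = M 0 0 * Ds k (fun i j => M i.succ j.succ - M i.succ 0 * u * M 0 j.succ) := by
  rw [Ds_comm, Ds_comm]
  rw [← Matrix.det_submatrix_equiv_self (e1 k) (Matrix.of M)]
  have heq : (Matrix.of M).submatrix (e1 k) (e1 k) =
      Matrix.fromBlocks (Matrix.of fun _ _ : Fin 1 => M 0 0)
        (Matrix.of fun (_ : Fin 1) j => M 0 j.succ)
        (Matrix.of fun i (_ : Fin 1) => M i.succ 0)
        (Matrix.of fun i j => M i.succ j.succ) := by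
    ext (i | i) (j | j) <;> rfl
  rw [heq]
  letI : Invertible (Matrix.of fun _ _ : Fin 1 => M 0 0) :=
    ⟨Matrix.of fun _ _ => u,
      by ext i j; simp [Matrix.mul_apply, h2, Matrix.one_apply, Subsingleton.elim i j],
      by ext i j; simp [Matrix.mul_apply, h1, Matrix.one_apply, Subsingleton.elim i j]⟩
  rw [Matrix.det_fromBlocks₁₁]
  have hinv : (⅟(Matrix.of fun _ _ : Fin 1 => M 0 0)) = Matrix.of fun _ _ => u := rfl
  congr 1
  · simp [Matrix.det_fin_one]
  · congr 1
    ext i j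
    simp [hinv, Matrix.mul_apply]
open Matrix Polynomial
def e2 (k n : ℕ) : Fin n ⊕ (Fin k × Fin n) ≃ Fin (k + 1) × Fin n where
  toFun := Sum.elim (fun a => (0, a)) (fun p => (p.1.succ, p.2))
  invFun p := Fin.cases (Sum.inl p.2) (fun i => Sum.inr (i, p.2)) p.1
  left_inv := by rintro (a | ⟨i, a⟩) <;> simp
  right_inv := by rintro ⟨i, a⟩; cases i using Fin.cases <;> simp

theorem bM_schur (k n : ℕ) (A : Fin (k + 1) → Fin (k + 1) → Matrix (Fin n) (Fin n) ℝ)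
    (h : IsUnit (A 0 0).det) :
    (bM (k + 1) n A).det = (A 0 0).det *
      (bM k n (fun i j => A i.succ j.succ - A i.succ 0 * (A 0 0)⁻¹ * A 0 j.succ)).det := by
  letI := (A 0 0).invertibleOfIsUnitDet h
  rw [← Matrix.det_submatrix_equiv_self (e2 k n) (bM (k + 1) n A)]
  have heq : (bM (k + 1) n A).submatrix (e2 k n) (e2 k n) =
      Matrix.fromBlocks (A 0 0)
        (Matrix.of fun a (q : Fin k × Fin n) => A 0 q.1.succ a q.2)
        (Matrix.of fun (q : Fin k × Fin n) b => A q.1.succ 0 q.2 b)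
        (bM k n fun i j => A i.succ j.succ) := by
    ext (a | ⟨i, a⟩) (b | ⟨j, b⟩) <;> rfl
  rw [heq, Matrix.det_fromBlocks₁₁, Matrix.invOf_eq_nonsing_inv]
  congr 1

theorem comm_inv {n : ℕ} (A B : Matrix (Fin n) (Fin n) ℝ) (h : IsUnit A.det)
    (hc : A * B = B * A) : A⁻¹ * B = B * A⁻¹ := by
  have h1 := Matrix.mul_nonsing_inv A h
  have h2 := Matrix.nonsing_inv_mul A h
  calc A⁻¹ * B = A⁻¹ * B * (A * A⁻¹) := by rw [h1, mul_one]
    _ = A⁻¹ * (B * A) * A⁻¹ := by simp only [mul_assoc]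
    _ = A⁻¹ * (A * B) * A⁻¹ := by rw [← hc]
    _ = A⁻¹ * A * (B * A⁻¹) := by simp only [mul_assoc]
    _ = B * A⁻¹ := by rw [h2, one_mul]

theorem step_inv (k n : ℕ) (A : Fin (k + 1) → Fin (k + 1) → Matrix (Fin n) (Fin n) ℝ)
    (hA : ∀ i j l m', A i j * A l m' = A l m' * A i j) (h : IsUnit (A 0 0).det)
    (ih : ∀ A' : Fin k → Fin k → Matrix (Fin n) (Fin n) ℝ,
      (∀ i j l m', A' i j * A' l m' = A' l m' * A' i j) →
      (bM k n A').det = (Ds k (fun i j => A' i j)).det) :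
    (bM (k + 1) n A).det = (Ds (k + 1) (fun i j => A i j)).det := by
  set A' : Fin k → Fin k → Matrix (Fin n) (Fin n) ℝ :=
    fun i j => A i.succ j.succ - A i.succ 0 * (A 0 0)⁻¹ * A 0 j.succ with hA'
  set s : Set (Matrix (Fin n) (Fin n) ℝ) :=
    (Set.range fun p : Fin (k + 1) × Fin (k + 1) => A p.1 p.2) ∪ {(A 0 0)⁻¹} with hs
  have hcs : ∀ x ∈ s, ∀ y ∈ s, x * y = y * x := by
    rintro x (⟨⟨i, j⟩, rfl⟩ | rfl) y (⟨⟨l, m⟩, rfl⟩ | rfl)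
    · exact hA i j l m
    · exact (comm_inv (A 0 0) (A i j) h (hA 0 0 i j)).symm
    · exact comm_inv (A 0 0) (A l m) h (hA 0 0 l m)
    · rfl
  letI : CommRing (Subring.closure s) := Subring.closureCommRingOfComm hcs
  have hmem : ∀ i j, A i j ∈ Subring.closure s := fun i j =>
    Subring.subset_closure (Or.inl ⟨(i, j), rfl⟩)
  have hmemu : (A 0 0)⁻¹ ∈ Subring.closure s := Subring.subset_closure (Or.inr rfl)
  set MS : Fin (k + 1) → Fin (k + 1) → Subring.closure s := fun i j => ⟨A i j, hmem i j⟩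
    with hMS
  set u : Subring.closure s := ⟨(A 0 0)⁻¹, hmemu⟩ with hu
  have h1 : MS 0 0 * u = 1 := Subtype.ext (Matrix.mul_nonsing_inv _ h)
  have h2 : u * MS 0 0 = 1 := Subtype.ext (Matrix.nonsing_inv_mul _ h)
  have hsch := Ds_schur k MS u h1 h2
  have hm := congrArg (Subring.closure s).subtype hsch
  rw [Ds_map, _root_.map_mul, Ds_map] at hm
  have hm' : Ds (k + 1) (fun i j => A i j) = A 0 0 * Ds k (fun i j => A' i j) := by
    convert hm using 3 <;> rfl
  have hA'comm : ∀ i j l m', A' i j * A' l m' = A' l m' * A' i j := by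
    have hmem' : ∀ i j, A' i j ∈ Subring.closure s := fun i j =>
      sub_mem (hmem _ _) (mul_mem (mul_mem (hmem _ _) hmemu) (hmem _ _))
    intro i j l m'
    exact Subtype.ext_iff.mp
      (mul_comm (⟨A' i j, hmem' i j⟩ : Subring.closure s) ⟨A' l m', hmem' l m'⟩)
  rw [bM_schur k n A h, ih A' hA'comm, hm', Matrix.det_mul]

theorem key (n k : ℕ) : ∀ A : Fin k → Fin k → Matrix (Fin n) (Fin n) ℝ,
    (∀ i j l m', A i j * A l m' = A l m' * A i j) →
    (bM k n A).det = (Ds k (fun i j => A i j)).det := by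
  induction k with
  | zero =>
    intro A _
    have h1 : (bM 0 n A).det = 1 := Matrix.det_isEmpty
    rw [h1]
    have h2 : Ds 0 (fun i j => A i j) = 1 := by
      simp [Ds]
    rw [h2, Matrix.det_one]
  | succ k ih =>
    intro A hA
    -- the perturbed family
    set At : ℝ → (Fin (k + 1) → Fin (k + 1) → Matrix (Fin n) (Fin n) ℝ) :=
      fun t i j => if i = 0 ∧ j = 0 then A 0 0 + t • 1 else A i j with hAt
    have hone : ∀ (t : ℝ) (X : Matrix (Fin n) (Fin n) ℝ), A 0 0 * X = X * A 0 0 →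
        (A 0 0 + t • 1) * X = X * (A 0 0 + t • 1) := by
      intro t X hX
      simp [add_mul, mul_add, Matrix.smul_mul, Matrix.mul_smul, hX]
    have hAtc : ∀ t, ∀ i j l m', At t i j * At t l m' = At t l m' * At t i j := by
      intro t i j l m'
      simp only [hAt]
      split_ifs with hij hlm hlm
      · rfl
      · exact hone t (A l m') (hA 0 0 l m')
      · exact (hone t (A i j) (hA 0 0 i j)).symm
      · exact hA i j l m'
    have hcase : ∀ t : ℝ, IsUnit ((A 0 0 + t • 1).det) →
        (bM (k + 1) n (At t)).det = (Ds (k + 1) (fun i j => At t i j)).det := by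
      intro t ht
      have h00 : At t 0 0 = A 0 0 + t • 1 := by simp [hAt]
      exact step_inv k n (At t) (hAtc t) (by rw [h00]; exact ht) ih
    -- polynomial family
    set Ap : Fin (k + 1) → Fin (k + 1) → Matrix (Fin n) (Fin n) ℝ[X] :=
      fun i j => (A i j).map Polynomial.C +
        if i = 0 ∧ j = 0 then (Polynomial.X : ℝ[X]) • 1 else 0 with hAp
    set P : ℝ[X] :=
      (bM (k + 1) n Ap).det - (Ds (k + 1) (fun i j => Ap i j)).det with hP
    have hApmap : ∀ (t : ℝ) i j, (Ap i j).map (Polynomial.evalRingHom t) = At t i j := by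
      intro t i j
      simp only [hAp, hAt]
      split_ifs with hij
      · ext a b
        simp [Matrix.map_apply, Matrix.one_apply, apply_ite (Polynomial.eval t), hij.1, hij.2]
      · ext a b
        simp [Matrix.map_apply]
    have hev : ∀ t : ℝ, Polynomial.eval t P =
        (bM (k + 1) n (At t)).det - (Ds (k + 1) (fun i j => At t i j)).det := by
      intro t
      rw [hP, Polynomial.eval_sub]
      simp only [← Polynomial.coe_evalRingHom]
      congr 1
      · rw [RingHom.map_det]
        congr 1
        ext ⟨i, a⟩ ⟨j, b⟩
        have := hApmap t i j
        calc ((bM (k + 1) n Ap).map (Polynomial.evalRingHom t)) (i, a) (j, b)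
            = ((Ap i j).map (Polynomial.evalRingHom t)) a b := rfl
          _ = At t i j a b := by rw [this]
      · rw [RingHom.map_det]
        congr 1
        refine (Ds_map (S := Matrix (Fin n) (Fin n) ℝ[X]) (T := Matrix (Fin n) (Fin n) ℝ)
          ((Polynomial.evalRingHom t).mapMatrix) (k + 1) (fun i j => Ap i j)).trans ?_
        congr 1
        funext i j
        rw [RingHom.mapMatrix_apply, hApmap]
    -- determinant of the perturbation is eval of charpoly
    have hdet : ∀ t : ℝ, (A 0 0 + t • 1).det = Polynomial.eval t ((-(A 0 0)).charpoly) := by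
      intro t
      rw [Matrix.charpoly]
      simp only [← Polynomial.coe_evalRingHom]
      rw [RingHom.map_det]
      congr 1
      ext a b
      by_cases hab : a = b <;>
        simp [Matrix.charmatrix_apply, Matrix.map_apply, Matrix.one_apply,
          Matrix.diagonal_apply, hab, add_comm]
    have hq : (-(A 0 0)).charpoly ≠ 0 := (Matrix.charpoly_monic _).ne_zero
    have hroots : {t : ℝ | P.IsRoot t}.Infinite := by
      apply Set.Infinite.mono (s := {t : ℝ | ¬ ((-(A 0 0)).charpoly.IsRoot t)})
      · intro t ht
        have hne : Polynomial.eval t ((-(A 0 0)).charpoly) ≠ 0 := ht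
        have hu : IsUnit ((A 0 0 + t • 1).det) := by
          rw [hdet t]; exact isUnit_iff_ne_zero.mpr hne
        have := hcase t hu
        simp only [Set.mem_setOf_eq, Polynomial.IsRoot, hev t, this, sub_self]
      · have hfin := Polynomial.finite_setOf_isRoot hq
        have := hfin.infinite_compl
        convert this using 1 <;> rfl
    have hP0 : P = 0 := Polynomial.eq_zero_of_infinite_isRoot P hroots
    have h0 := hev 0
    rw [hP0] at h0
    simp only [Polynomial.eval_zero] at h0
    have hA0 : At 0 = A := by
      funext i j
      simp only [hAt]
      split_ifs with hij
      · rw [hij.1, hij.2]; simp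
      · rfl
    rw [hA0] at h0
    exact (sub_eq_zero.mp h0.symm)

theorem det_of_commuting_block_matrix
    (k n : ℕ) (A : Fin k → Fin k → Matrix (Fin n) (Fin n) ℝ)
    (hcomm : ∀ i j l m', A i j * A l m' = A l m' * A i j) :
    (Matrix.of fun p q : Fin k × Fin n => A p.1 q.1 p.2 q.2).det
      = (∑ σ : Equiv.Perm (Fin k),
          ((Equiv.Perm.sign σ : ℤ) • (List.ofFn fun i => A i (σ i)).prod)).det := by
  exact key n k A hcomm
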